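/- Let t_1, …, t_n ∈ [−1,1] be pairwise distinct quadrature nodes, w_1, …, w_n ∈ ℝ weights, and g : ℝ → ℝ continuous. Fix an index k₀ with w_{k₀} ≠ 0 and g(t_{k₀}) ≠ 0. Then the absolute quadrature error s ↦ | ∫_{−1}^{1} log|t − s| g(t) dt − Σ_{k=1}^{n} w_k log|t_k − s| g(t_k) | tends to +∞ as s → t_{k₀} with s ≠ t_{k₀}. -/

import Mathlib

open Real Filter MeasureTheory intervalIntegral

lemma myIntegrable_log01 : IntervalIntegrable Real.log volume 0 1 := by
  have h := intervalIntegrable_deriv_of_nonneg (g := fun x : ℝ => x - x * Real.log x)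
    (g' := fun x => -Real.log x)
    ((continuous_id.sub Real.continuous_mul_log).continuousOn)
    (fun x hx => by
      have hx' : x ≠ 0 := by
        rw [show min (0:ℝ) 1 = 0 by norm_num, show max (0:ℝ) 1 = 1 by norm_num] at hx
        exact ne_of_gt hx.1
      have h1 := (hasDerivAt_id x).sub (Real.hasDerivAt_mul_log hx')
      exact h1.congr_deriv (by ring))
    (fun x hx => by
      rw [show min (0:ℝ) 1 = 0 by norm_num, show max (0:ℝ) 1 = 1 by norm_num] at hx
      have := Real.log_nonpos (le_of_lt hx.1) (le_of_lt hx.2)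
      beta_reduce; linarith)
  have h2 := h.neg
  have : (-fun x : ℝ => -Real.log x) = Real.log := by funext x; simp
  rwa [this] at h2

lemma myIntegrable_log_nonneg (c : ℝ) (hc : 0 ≤ c) :
    IntervalIntegrable Real.log volume 0 c := by
  rcases le_total c 1 with h | h
  · exact myIntegrable_log01.mono_set (by
      rw [Set.uIcc_of_le hc, Set.uIcc_of_le zero_le_one]
      exact Set.Icc_subset_Icc le_rfl h)
  · exact myIntegrable_log01.trans (intervalIntegrable_log (by
      rw [Set.uIcc_of_le h]
      intro h0
      exact absurd h0.1 (by norm_num)))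

lemma myIntegrable_log (a b : ℝ) : IntervalIntegrable Real.log volume a b := by
  have key : ∀ c : ℝ, IntervalIntegrable Real.log volume 0 c := by
    intro c
    rcases le_total 0 c with h | h
    · exact myIntegrable_log_nonneg c h
    · have h1 := myIntegrable_log_nonneg (-c) (by linarith)
      have h2 := (IntervalIntegrable.iff_comp_neg).mp h1
      simp only [neg_zero, neg_neg] at h2
      have : (fun x : ℝ => Real.log (-x)) = Real.log := by
        funext x; rw [Real.log_neg_eq_log]
      rwa [this] at h2
  exact ((key a).symm).trans (key b)


/-- The quadrature error of the logarithmic kernel blows up as the source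
parameter approaches a quadrature node `t k₀` whose weight and density value
are nonzero: the absolute error tends to `+∞` as `s → t k₀`, `s ≠ t k₀`. -/
theorem quadrature_error_blowup_at_node
    (n : ℕ) (t : Fin n → ℝ) (ht : ∀ k, t k ∈ Set.Icc (-1:ℝ) 1)
    (htinj : Function.Injective t) (w : Fin n → ℝ)
    (g : ℝ → ℝ) (hg : Continuous g)
    (k₀ : Fin n) (hw : w k₀ ≠ 0) (hgk : g (t k₀) ≠ 0) :
    Tendsto
      (fun s : ℝ =>
        |(∫ τ in (-1:ℝ)..1, Real.log |τ - s| * g τ)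
          - ∑ k : Fin n, w k * (Real.log |t k - s| * g (t k))|)
      (nhdsWithin (t k₀) {t k₀}ᶜ) atTop := by
  set c : ℝ := t k₀ with hc
  have hc1 : c ∈ Set.Icc (-1:ℝ) 1 := ht k₀
  -- integrability of the kernel
  have hker : ∀ s : ℝ, IntervalIntegrable (fun τ => Real.log (τ - s)) volume (-1) 1 := by
    intro s
    have := (myIntegrable_log (-1 - s) (1 - s)).comp_sub_right s
    simpa using this
  have hint : ∀ s : ℝ, IntervalIntegrable (fun τ => Real.log |τ - s| * g τ) volume (-1) 1 := by
    intro s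
    have h1 : (fun τ => Real.log |τ - s| * g τ) = fun τ => Real.log (τ - s) * g τ := by
      funext τ; rw [Real.log_abs]
    rw [h1]
    exact (hker s).mul_continuousOn hg.continuousOn
  -- bound on g
  obtain ⟨M, hM⟩ := isCompact_Icc.exists_bound_of_continuousOn
    (s := Set.Icc (-1:ℝ) 1) hg.continuousOn
  have hM0 : 0 ≤ M := le_trans (norm_nonneg _) (hM 0 (by norm_num))
  set C : ℝ := (∫ u in (-3:ℝ)..3, |Real.log u|) * M with hC
  -- uniform bound on the integral near c
  have hAbound : ∀ s : ℝ, |s - c| ≤ 1 →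
      |∫ τ in (-1:ℝ)..1, Real.log |τ - s| * g τ| ≤ C := by
    intro s hs
    have hs2 : -2 ≤ s ∧ s ≤ 2 := by
      rw [abs_le] at hs
      constructor <;> [linarith [hc1.1, hs.1]; linarith [hc1.2, hs.2]]
    calc |∫ τ in (-1:ℝ)..1, Real.log |τ - s| * g τ|
        ≤ ∫ τ in (-1:ℝ)..1, |Real.log |τ - s| * g τ| :=
          intervalIntegral.abs_integral_le_integral_abs (by norm_num)
      _ ≤ ∫ τ in (-1:ℝ)..1, |Real.log (τ - s)| * M := by
          apply intervalIntegral.integral_mono_on (by norm_num) (hint s).abs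
            (((hker s).abs).mul_const M)
          intro x hx
          rw [abs_mul, Real.log_abs]
          exact mul_le_mul_of_nonneg_left (by simpa using hM x hx) (abs_nonneg _)
      _ = (∫ τ in (-1:ℝ)..1, |Real.log (τ - s)|) * M :=
          intervalIntegral.integral_mul_const M _
      _ = (∫ u in (-1 - s)..(1 - s), |Real.log u|) * M := by
          rw [intervalIntegral.integral_comp_sub_right (fun u => |Real.log u|) s]
      _ ≤ (∫ u in (-3:ℝ)..3, |Real.log u|) * M := by
          apply mul_le_mul_of_nonneg_right _ hM0
          apply intervalIntegral.integral_mono_interval (by linarith [hs2.2])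
            (by linarith) (by linarith [hs2.1])
            (Filter.Eventually.of_forall fun x => abs_nonneg _)
            (myIntegrable_log (-3) 3).abs
  -- the regular part of the sum
  set F : ℝ → ℝ := fun s => ∑ k ∈ Finset.univ.erase k₀,
    w k * (Real.log |t k - s| * g (t k)) with hF
  have hFcont : Tendsto F (nhds c) (nhds (F c)) := by
    apply tendsto_finset_sum
    intro k hk
    have hkne : t k - c ≠ 0 :=
      sub_ne_zero.mpr fun h => (Finset.mem_erase.mp hk).1 (htinj (h.trans hc))
    apply Tendsto.const_mul
    apply Tendsto.mul _ tendsto_const_nhds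
    have habs : Tendsto (fun s : ℝ => |t k - s|) (nhds c) (nhds |t k - c|) :=
      ((continuous_const.sub continuous_id).abs).tendsto c
    exact (Real.continuousAt_log (abs_ne_zero.mpr hkne)).tendsto.comp habs
  have hFb : ∀ᶠ s in nhds c, |F s| < |F c| + 1 :=
    (hFcont.abs).eventually_lt_const (by linarith [abs_nonneg (F c)])
  -- blow-up of the singular term
  set K : ℝ := |w k₀ * g c| with hK
  have hK0 : 0 < K := abs_pos.mpr (mul_ne_zero hw hgk)
  have hlog : Tendsto (fun s : ℝ => abs (Real.log |c - s|))
      (nhdsWithin c {c}ᶜ) atTop := by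
    have h1 : Tendsto (fun s : ℝ => |c - s|) (nhdsWithin c {c}ᶜ)
        (nhdsWithin 0 (Set.Ioi 0)) := by
      apply tendsto_nhdsWithin_of_tendsto_nhds_of_eventually_within
      · have h0 : Tendsto (fun s : ℝ => |c - s|) (nhds c) (nhds 0) := by
          have h1 := ((continuous_const.sub continuous_id :
            Continuous fun s : ℝ => c - s).abs).tendsto c
          simpa [← hc] using h1
        exact h0.mono_left nhdsWithin_le_nhds
      · filter_upwards [self_mem_nhdsWithin] with s hs
        simp only [Set.mem_Ioi, abs_pos, sub_ne_zero]
        exact fun h => hs (h.symm ▸ rfl)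
    exact tendsto_abs_atBot_atTop.comp
      (Real.tendsto_log_nhdsGT_zero.comp h1)
  have hφ : Tendsto (fun s : ℝ => K * abs (Real.log |c - s|) - (|F c| + 1) - C)
      (nhdsWithin c {c}ᶜ) atTop := by
    apply tendsto_atTop_add_const_right
    apply tendsto_atTop_add_const_right
    exact hlog.const_mul_atTop hK0
  apply tendsto_atTop_mono' _ _ hφ
  have hev1 : ∀ᶠ s in nhdsWithin c {c}ᶜ, |s - c| ≤ 1 := by
    apply eventually_nhdsWithin_of_eventually_nhds
    have : ∀ᶠ s in nhds c, dist s c ≤ 1 := Metric.eventually_nhds_iff_ball.mpr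
      ⟨1, by norm_num, fun y hy => le_of_lt (by simpa [Real.dist_eq] using hy)⟩
    simpa [Real.dist_eq] using this
  filter_upwards [hev1, eventually_nhdsWithin_of_eventually_nhds hFb] with s hs1 hs2
  -- decompose the sum
  have hsum : ∑ k : Fin n, w k * (Real.log |t k - s| * g (t k))
      = w k₀ * (Real.log |c - s| * g c) + F s := by
    rw [hF, hc]
    exact (Finset.add_sum_erase _ _ (Finset.mem_univ k₀)).symm
  have hkey : ∀ a x f : ℝ, |x| - |f| - |a| ≤ |a - (x + f)| := by
    intro a x f
    have h1 : |x| ≤ |a - f| + |a - (x + f)| := by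
      have h := abs_sub (a - f) (a - (x + f))
      have he : (a - f) - (a - (x + f)) = x := by ring
      rwa [he] at h
    have h2 : |a - f| ≤ |a| + |f| := abs_sub _ _
    linarith
  rw [hsum]
  have hX : |w k₀ * (Real.log |c - s| * g c)| = K * abs (Real.log |c - s|) := by
    rw [hK, abs_mul, abs_mul, abs_mul]; ring
  calc K * abs (Real.log |c - s|) - (|F c| + 1) - C
      ≤ |w k₀ * (Real.log |c - s| * g c)| - |F s|
        - |∫ τ in (-1:ℝ)..1, Real.log |τ - s| * g τ| := by
        rw [hX]
        have := hAbound s hs1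
        linarith [le_of_lt hs2]
    _ ≤ _ := hkey _ _ _
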